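/- If J is an r-shallow minor of a graph G, and every junction-free subgraph of J (with respect to a fixed orientation of G with all in-degrees ≤ d and a fixed representing collection of paths each with at most 2r+2 vertices) has edge density at most t, then J has edge density at most e·t·((2r+2)d + 1). -/

import Mathlib

/-- `S` is an `r`-shallow model of `J` in `G`. -/
def ShallowModel {V W : Type*} (r : ℕ) (J : SimpleGraph W) (G : SimpleGraph V)
    (S : W → Set V) : Prop :=
  (∀ i, ∃ c : S i, ∀ w : S i, ∃ p : (G.induce (S i)).Walk c w, p.length ≤ r) ∧
  (Pairwise fun i j => Disjoint (S i) (S j)) ∧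
  (∀ i j, J.Adj i j → ∃ u ∈ S i, ∃ v ∈ S j, G.Adj u v)

lemma weight_sum {α : Type*} [DecidableEq α] [Fintype α] (T R : Finset α)
    (hd : Disjoint T R) (p q : ℝ) (hpq : p + q = 1) :
    ∑ A ∈ Finset.univ.powerset.filter (fun A => T ⊆ A ∧ Disjoint A R),
      p ^ A.card * q ^ (Finset.univ \ A).card = p ^ T.card * q ^ R.card := by
  classical
  set u : Finset α := (Finset.univ \ T) \ R with hu
  have base : ∑ B ∈ u.powerset, p ^ B.card * q ^ (u \ B).card = 1 := by
    calc ∑ B ∈ u.powerset, p ^ B.card * q ^ (u \ B).card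
        = ∑ B ∈ u.powerset, (∏ _ ∈ B, p) * ∏ _ ∈ u \ B, q := by
          simp [Finset.prod_const]
      _ = ∏ _ ∈ u, (p + q) := (Finset.prod_add _ _ _).symm
      _ = 1 := by simp [hpq]
  have main : ∑ A ∈ Finset.univ.powerset.filter (fun A => T ⊆ A ∧ Disjoint A R),
      p ^ A.card * q ^ (Finset.univ \ A).card
      = ∑ B ∈ u.powerset, p ^ T.card * q ^ R.card * (p ^ B.card * q ^ (u \ B).card) := by
    refine Finset.sum_nbij' (fun A => A \ T) (fun B => B ∪ T) ?_ ?_ ?_ ?_ ?_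
    · intro A hA
      simp only [Finset.mem_filter, Finset.mem_powerset] at hA ⊢
      obtain ⟨-, hT, hR⟩ := hA
      intro x hx
      simp only [hu, Finset.mem_sdiff, Finset.mem_univ, true_and]
      simp only [Finset.mem_sdiff] at hx
      exact ⟨hx.2, fun hxR => (Finset.disjoint_left.mp hR hx.1) hxR⟩
    · intro B hB
      simp only [Finset.mem_powerset, hu] at hB
      simp only [Finset.mem_filter, Finset.mem_powerset]
      refine ⟨Finset.subset_univ _, Finset.subset_union_right, ?_⟩
      rw [Finset.disjoint_union_left]
      constructor
      · exact Finset.disjoint_left.mpr fun x hx hxR => by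
          have := hB hx; simp [Finset.mem_sdiff] at this; exact this.2 hxR
      · exact hd
    · intro A hA
      simp only [Finset.mem_filter, Finset.mem_powerset] at hA
      exact Finset.sdiff_union_of_subset hA.2.1
    · intro B hB
      simp only [Finset.mem_powerset, hu] at hB
      refine Finset.union_sdiff_cancel_right ?_
      exact Finset.disjoint_left.mpr fun x hx hxT => by
        have := hB hx; simp [Finset.mem_sdiff] at this; exact this.1 hxT
    · intro A hA
      simp only [Finset.mem_filter, Finset.mem_powerset] at hA
      obtain ⟨-, hT, hR⟩ := hA
      have hcard : A.card = (A \ T).card + T.card := (Finset.card_sdiff_add_card_eq_card hT).symm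
      have hset : u \ (A \ T) = (Finset.univ \ A) \ R := by
        ext x
        simp only [hu, Finset.mem_sdiff, Finset.mem_univ, true_and]
        constructor
        · rintro ⟨⟨hxT, hxR⟩, hx⟩
          refine ⟨fun hxA => hx ⟨hxA, hxT⟩, hxR⟩
        · rintro ⟨hxA, hxR⟩
          exact ⟨⟨fun hxT => hxA (hT hxT), hxR⟩, fun h => hxA h.1⟩
      have hRsub : R ⊆ Finset.univ \ A := by
        intro x hx
        simp only [Finset.mem_sdiff, Finset.mem_univ, true_and]
        exact fun hxA => (Finset.disjoint_left.mp hR hxA) hx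
      have hcard2 : (Finset.univ \ A).card = (u \ (A \ T)).card + R.card := by
        rw [hset]; exact (Finset.card_sdiff_add_card_eq_card hRsub).symm
      rw [hcard, hcard2, pow_add, pow_add]; ring
  rw [main, ← Finset.mul_sum, base, mul_one]

lemma aux_swap {α β : Type*} [DecidableEq α] [Fintype α] (p q : ℝ) (s : Finset β)
    (P : β → Finset α → Prop) [∀ e A, Decidable (P e A)] :
    ∑ A ∈ Finset.univ.powerset,
      (p ^ A.card * q ^ (Finset.univ \ A).card) * ((s.filter (fun e => P e A)).card : ℝ)
    = ∑ e ∈ s, ∑ A ∈ Finset.univ.powerset.filter (fun A => P e A),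
        p ^ A.card * q ^ (Finset.univ \ A).card := by
  calc ∑ A ∈ Finset.univ.powerset,
        (p ^ A.card * q ^ (Finset.univ \ A).card) * ((s.filter (fun e => P e A)).card : ℝ)
      = ∑ A ∈ Finset.univ.powerset, ∑ e ∈ s,
          (if P e A then p ^ A.card * q ^ (Finset.univ \ A).card else 0) := by
        refine Finset.sum_congr rfl fun A _ => ?_
        rw [← Finset.sum_filter, Finset.sum_const, nsmul_eq_mul, mul_comm]
    _ = ∑ e ∈ s, ∑ A ∈ Finset.univ.powerset,
          (if P e A then p ^ A.card * q ^ (Finset.univ \ A).card else 0) := Finset.sum_comm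
    _ = _ := Finset.sum_congr rfl fun e _ => (Finset.sum_filter _ _).symm

lemma aux_vert {α : Type*} [DecidableEq α] [Fintype α] (p q : ℝ) (hpq : p + q = 1) :
    ∑ A ∈ (Finset.univ : Finset α).powerset,
      (p ^ A.card * q ^ (Finset.univ \ A).card) * (A.card : ℝ)
    = p * Fintype.card α := by
  classical
  calc ∑ A ∈ (Finset.univ : Finset α).powerset,
        (p ^ A.card * q ^ (Finset.univ \ A).card) * (A.card : ℝ)
      = ∑ A ∈ (Finset.univ : Finset α).powerset,
          (p ^ A.card * q ^ (Finset.univ \ A).card) *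
            (((Finset.univ : Finset α).filter (fun v => v ∈ A)).card : ℝ) := by
        refine Finset.sum_congr rfl fun A hA => ?_
        have h0 : (Finset.univ.filter (fun v => v ∈ A)) = A := by ext v; simp
        rw [h0]
      _ = ∑ v ∈ (Finset.univ : Finset α),
          ∑ A ∈ (Finset.univ : Finset α).powerset.filter (fun A => (v : α) ∈ A),
            p ^ A.card * q ^ (Finset.univ \ A).card :=
        aux_swap p q Finset.univ (fun v A => v ∈ A)
      _ = ∑ _v ∈ (Finset.univ : Finset α), p := by
        refine Finset.sum_congr rfl fun v _ => ?_
        have h1 : (Finset.univ : Finset α).powerset.filter (fun A : Finset α => v ∈ A)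
            = (Finset.univ : Finset α).powerset.filter
              (fun A => ({v} : Finset α) ⊆ A ∧ Disjoint A (∅ : Finset α)) := by
          apply Finset.filter_congr; intro A _; simp
        rw [h1, weight_sum {v} ∅ (by simp) p q hpq]
        simp
      _ = p * Fintype.card α := by
        rw [Finset.sum_const, nsmul_eq_mul, Finset.card_univ, mul_comm]

/-- The junction-free subgraph induced by vertex set `A`. -/
def junctionSub {W : Type*} (J : SimpleGraph W) (Rf : W → W → Finset W)
    (hsym : ∀ i j, Rf i j = Rf j i) (A : Finset W) : J.Subgraph where
  verts := ↑A
  Adj i j := J.Adj i j ∧ i ∈ A ∧ j ∈ A ∧ Disjoint A (Rf i j)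
  adj_sub h := h.1
  edge_vert h := h.2.1
  symm := ⟨fun i j h => ⟨h.1.symm, h.2.2.1, h.2.1, hsym j i ▸ h.2.2.2⟩⟩

lemma junctionSub_adj {W : Type*} (J : SimpleGraph W) (Rf : W → W → Finset W)
    (hsym : ∀ i j, Rf i j = Rf j i) (A : Finset W) (i j : W) :
    (junctionSub J Rf hsym A).Adj i j ↔
      J.Adj i j ∧ i ∈ A ∧ j ∈ A ∧ Disjoint A (Rf i j) := Iff.rfl

lemma junctionSub_verts {W : Type*} (J : SimpleGraph W) (Rf : W → W → Finset W)
    (hsym : ∀ i j, Rf i j = Rf j i) (A : Finset W) :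
    (junctionSub J Rf hsym A).verts = ↑A := rfl

theorem test {W : Type*} [Fintype W] : True := trivial

/-- Let `J` be an `r`-shallow minor of `G` via an `r`-shallow model `S`, represented by
a collection of paths `Q i j` (given by their vertex sets), each with at most `2r + 2`
vertices.  Fix an orientation `D` of `G` with all in-degrees at most `d`.  A junction in
a subgraph `J'` of `J` is a pair `((a,b), ij)` with `(a,b)` an arc of `D`, `ij` an edge
of `J'`, `b ∈ Q i j` and `a ∈ S ℓ` for some vertex `ℓ` of `J'` other than `i, j`.  If
every junction-free subgraph of `J` has edge density at most `t`, then `J` has edge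
density at most `e·t·((2r+2)d + 1)`. -/
theorem stmt16 {V W : Type*} [Fintype V] [Fintype W] [Nonempty W]
    (G : SimpleGraph V) (J : SimpleGraph W) (r d : ℕ) (t : ℝ) (ht : 0 ≤ t)
    (D : V → V → Prop)
    (hor : ∀ u v, G.Adj u v ↔ (D u v ∨ D v u))
    (hnot2 : ∀ u v, D u v → ¬ D v u)
    (hin : ∀ v, {u | D u v}.ncard ≤ d)
    (S : W → Set V) (hS : ShallowModel r J G S)
    (Q : W → W → Set V) (hQsymm : ∀ i j, Q i j = Q j i)
    (hQcard : ∀ i j, J.Adj i j → (Q i j).ncard ≤ 2 * r + 2)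
    (hfree : ∀ J' : J.Subgraph,
      (∀ a b i j ℓ, J'.Adj i j → D a b → b ∈ Q i j → ℓ ∈ J'.verts →
        ℓ ≠ i → ℓ ≠ j → a ∉ S ℓ) →
      J'.verts.Nonempty → (J'.edgeSet.ncard : ℝ) ≤ t * J'.verts.ncard) :
    (J.edgeSet.ncard : ℝ) ≤
      Real.exp 1 * t * (((2 * r + 2) * d : ℕ) + 1) * Fintype.card W := by
  classical
  obtain ⟨-, hdisj, -⟩ := hS
  set k : ℕ := (2 * r + 2) * d with hk
  set p : ℝ := 1 / ((k : ℝ) + 1) with hp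
  set q : ℝ := 1 - p with hqdef
  have hk0 : (0:ℝ) ≤ (k:ℝ) := Nat.cast_nonneg k
  have hkpos : (0:ℝ) < (k:ℝ) + 1 := by linarith
  have hppos : 0 < p := by rw [hp]; positivity
  have hp1 : p ≤ 1 := by rw [hp, div_le_one hkpos]; linarith
  have hq0 : (0:ℝ) ≤ q := by rw [hqdef]; linarith
  have hq1 : q ≤ 1 := by rw [hqdef]; linarith
  have hpq : p + q = 1 := by rw [hqdef]; ring
  -- the junction witness sets
  set Rf : W → W → Finset W := fun i j =>
    Finset.univ.filter (fun ℓ => ℓ ≠ i ∧ ℓ ≠ j ∧ ∃ a b, D a b ∧ b ∈ Q i j ∧ a ∈ S ℓ)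
    with hRf
  have hmemRf : ∀ i j ℓ, ℓ ∈ Rf i j ↔
      (ℓ ≠ i ∧ ℓ ≠ j ∧ ∃ a b, D a b ∧ b ∈ Q i j ∧ a ∈ S ℓ) := by
    intro i j ℓ; rw [hRf]; simp
  have hRsymm : ∀ i j, Rf i j = Rf j i := by
    intro i j; ext ℓ; rw [hmemRf, hmemRf, hQsymm i j]; tauto
  have hRcard : ∀ i j, J.Adj i j → (Rf i j).card ≤ k := by
    intro i j hadj
    rw [hk]
    rcases (Rf i j).eq_empty_or_nonempty with he | ⟨ℓ₀, hℓ₀⟩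
    · simp [he]
    · obtain ⟨-, -, a₀, b₀, -, -, -⟩ := (hmemRf i j ℓ₀).mp hℓ₀
      set Uf : Finset V := (Set.toFinite (Q i j)).toFinset.biUnion
        (fun b => Finset.univ.filter (fun a => D a b)) with hUf
      have hUcard : Uf.card ≤ (2 * r + 2) * d := by
        calc Uf.card ≤ ∑ b ∈ (Set.toFinite (Q i j)).toFinset,
              (Finset.univ.filter (fun a => D a b)).card := Finset.card_biUnion_le
          _ ≤ ∑ _b ∈ (Set.toFinite (Q i j)).toFinset, d := by
              refine Finset.sum_le_sum fun b _ => ?_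
              have h := hin b
              rwa [Set.ncard_eq_toFinset_card', Set.toFinset_setOf] at h
          _ = (Set.toFinite (Q i j)).toFinset.card * d := by
              rw [Finset.sum_const, smul_eq_mul]
          _ ≤ (2 * r + 2) * d := by
              apply Nat.mul_le_mul_right
              have h := hQcard i j hadj
              rwa [Set.ncard_eq_toFinset_card _ (Set.toFinite _)] at h
      set f : W → V := fun ℓ =>
        if h : ∃ a, a ∈ S ℓ ∧ ∃ b, D a b ∧ b ∈ Q i j then h.choose else a₀ with hf
      have hfspec : ∀ ℓ ∈ Rf i j, f ℓ ∈ S ℓ ∧ ∃ b, D (f ℓ) b ∧ b ∈ Q i j := by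
        intro ℓ hℓ
        obtain ⟨-, -, a, b, hD, hb, ha⟩ := (hmemRf i j ℓ).mp hℓ
        have hex : ∃ a, a ∈ S ℓ ∧ ∃ b, D a b ∧ b ∈ Q i j := ⟨a, ha, b, hD, hb⟩
        simp only [hf, dif_pos hex]
        exact hex.choose_spec
      have hinj : (Rf i j).card ≤ Uf.card := by
        apply Finset.card_le_card_of_injOn f
        · intro ℓ hℓ
          obtain ⟨ha, b, hD, hb⟩ := hfspec ℓ hℓ
          rw [hUf]
          simp only [Finset.mem_coe, Finset.mem_biUnion, Set.Finite.mem_toFinset, Finset.mem_filter,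
            Finset.mem_univ, true_and]
          exact ⟨b, hb, hD⟩
        · intro ℓ hℓ ℓ' hℓ' hff
          by_contra hne
          have h1 := (hfspec ℓ (by simpa using hℓ)).1
          have h2 := (hfspec ℓ' (by simpa using hℓ')).1
          exact (Set.disjoint_left.mp (hdisj hne) h1) (hff ▸ h2)
      omega
  -- the junction-free subgraphs and their edge density
  have hE : ∀ A : Finset W,
      ((junctionSub J Rf hRsymm A).edgeSet.ncard : ℝ) ≤ t * A.card := by
    intro A
    rcases A.eq_empty_or_nonempty with he | hne
    · have hset : (junctionSub J Rf hRsymm A).edgeSet = ∅ := by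
        ext e
        induction e using Sym2.ind with
        | _ i j =>
          simp [SimpleGraph.Subgraph.mem_edgeSet, junctionSub_adj, he]
      rw [hset, he]
      simp
    · have hjf : ∀ a b i j ℓ, (junctionSub J Rf hRsymm A).Adj i j → D a b → b ∈ Q i j →
          ℓ ∈ (junctionSub J Rf hRsymm A).verts → ℓ ≠ i → ℓ ≠ j → a ∉ S ℓ := by
        intro a b i j ℓ hij hD hb hℓ hℓi hℓj haS
        have hℓA : ℓ ∈ A := hℓ
        have hℓR : ℓ ∈ Rf i j := (hmemRf i j ℓ).mpr ⟨hℓi, hℓj, a, b, hD, hb, haS⟩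
        exact (Finset.disjoint_right.mp hij.2.2.2 hℓR) hℓA
      have h := hfree _ hjf (by
        rw [junctionSub_verts]
        exact Finset.coe_nonempty.mpr hne)
      rwa [junctionSub_verts, Set.ncard_coe_finset] at h
  -- edge finset of J
  set ES : Finset (Sym2 W) := (Set.toFinite J.edgeSet).toFinset with hES
  have hEScard : (J.edgeSet.ncard : ℝ) = (ES.card : ℝ) := by
    rw [Set.ncard_eq_toFinset_card J.edgeSet (Set.toFinite _)]
  have hcount : ∀ A : Finset W, (junctionSub J Rf hRsymm A).edgeSet.ncard
      = (ES.filter (fun e => e ∈ (junctionSub J Rf hRsymm A).edgeSet)).card := by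
    intro A
    rw [Set.ncard_eq_toFinset_card _ (Set.toFinite _)]
    have h0 : (Set.toFinite ((junctionSub J Rf hRsymm A).edgeSet)).toFinset
        = ES.filter (fun e => e ∈ (junctionSub J Rf hRsymm A).edgeSet) := by
      ext e
      simp only [Set.Finite.mem_toFinset, Finset.mem_filter, hES]
      exact ⟨fun h => ⟨SimpleGraph.Subgraph.edgeSet_subset _ h, h⟩, fun h => h.2⟩
    rw [h0]
  -- per-edge lower bound
  have lower : ∀ e ∈ ES, p ^ 2 * q ^ k ≤ ∑ A ∈ Finset.univ.powerset.filter
      (fun A => e ∈ (junctionSub J Rf hRsymm A).edgeSet),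
      p ^ A.card * q ^ (Finset.univ \ A).card := by
    intro e he
    revert he
    induction e using Sym2.ind with
    | _ i j =>
      intro he
      have hadj : J.Adj i j := by
        rw [hES, Set.Finite.mem_toFinset] at he; exact he
      have hne : i ≠ j := hadj.ne
      have hiR : i ∉ Rf i j := fun h => (((hmemRf i j i).mp h).1) rfl
      have hjR : j ∉ Rf i j := fun h => (((hmemRf i j j).mp h).2.1) rfl
      have hdisjT : Disjoint ({i, j} : Finset W) (Rf i j) := by
        refine Finset.disjoint_left.mpr fun x hx hxR => ?_
        simp only [Finset.mem_insert, Finset.mem_singleton] at hx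
        rcases hx with rfl | rfl
        exacts [hiR hxR, hjR hxR]
      have hfe : Finset.univ.powerset.filter
            (fun A => s(i, j) ∈ (junctionSub J Rf hRsymm A).edgeSet)
          = Finset.univ.powerset.filter
            (fun A => ({i, j} : Finset W) ⊆ A ∧ Disjoint A (Rf i j)) := by
        apply Finset.filter_congr
        intro A _
        rw [SimpleGraph.Subgraph.mem_edgeSet, junctionSub_adj]
        constructor
        · rintro ⟨-, hi, hj, hd⟩
          refine ⟨?_, hd⟩
          rw [Finset.insert_subset_iff, Finset.singleton_subset_iff]
          exact ⟨hi, hj⟩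
        · rintro ⟨hsub, hd⟩
          rw [Finset.insert_subset_iff, Finset.singleton_subset_iff] at hsub
          exact ⟨hadj, hsub.1, hsub.2, hd⟩
      rw [hfe, weight_sum _ _ hdisjT p q hpq]
      have hc2 : ({i, j} : Finset W).card = 2 := by
        rw [Finset.card_insert_of_notMem (by simp [hne]), Finset.card_singleton]
      rw [hc2]
      exact mul_le_mul_of_nonneg_left
        (pow_le_pow_of_le_one hq0 hq1 (hRcard i j hadj)) (by positivity)
  -- main inequality
  have hmain : (ES.card : ℝ) * (p ^ 2 * q ^ k) ≤ t * (p * (Fintype.card W : ℝ)) := by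
    calc (ES.card : ℝ) * (p ^ 2 * q ^ k) = ∑ _e ∈ ES, p ^ 2 * q ^ k := by
          rw [Finset.sum_const, nsmul_eq_mul]
      _ ≤ ∑ e ∈ ES, ∑ A ∈ Finset.univ.powerset.filter
            (fun A => e ∈ (junctionSub J Rf hRsymm A).edgeSet),
            p ^ A.card * q ^ (Finset.univ \ A).card := Finset.sum_le_sum lower
      _ = ∑ A ∈ Finset.univ.powerset, (p ^ A.card * q ^ (Finset.univ \ A).card) *
            ((ES.filter (fun e => e ∈ (junctionSub J Rf hRsymm A).edgeSet)).card : ℝ) :=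
          (aux_swap p q ES _).symm
      _ = ∑ A ∈ Finset.univ.powerset, (p ^ A.card * q ^ (Finset.univ \ A).card) *
            (((junctionSub J Rf hRsymm A).edgeSet.ncard : ℝ)) := by
          refine Finset.sum_congr rfl fun A _ => ?_
          rw [hcount A]
      _ ≤ ∑ A ∈ Finset.univ.powerset,
            (p ^ A.card * q ^ (Finset.univ \ A).card) * (t * A.card) := by
          refine Finset.sum_le_sum fun A _ => ?_
          exact mul_le_mul_of_nonneg_left (hE A)
            (mul_nonneg (pow_nonneg hppos.le _) (pow_nonneg hq0 _))
      _ = t * ∑ A ∈ Finset.univ.powerset,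
            (p ^ A.card * q ^ (Finset.univ \ A).card) * (A.card : ℝ) := by
          rw [Finset.mul_sum]
          exact Finset.sum_congr rfl fun A _ => by ring
      _ = t * (p * Fintype.card W) := by rw [aux_vert p q hpq]
  -- the exponential estimate
  have hqk : Real.exp (-1) ≤ q ^ k := by
    rcases Nat.eq_zero_or_pos k with h0 | hkp
    · rw [h0, pow_zero]
      exact Real.exp_le_one_iff.mpr (by norm_num)
    · have hkR : (0:ℝ) < (k:ℝ) := by exact_mod_cast hkp
      have hqval : q = (k:ℝ) / ((k:ℝ) + 1) := by rw [hqdef, hp]; field_simp; ring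
      have h2 : ((k:ℝ) + 1) / (k:ℝ) ≤ Real.exp (1 / (k:ℝ)) := by
        calc ((k:ℝ)+1)/(k:ℝ) = 1/(k:ℝ) + 1 := by field_simp; ring
          _ ≤ _ := Real.add_one_le_exp _
      have h3 : Real.exp (-(1 / (k:ℝ))) ≤ q := by
        rw [Real.exp_neg, hqval]
        have h4 := inv_anti₀ (by positivity) h2
        rwa [show (((k:ℝ)+1)/(k:ℝ))⁻¹ = (k:ℝ)/((k:ℝ)+1) from inv_div _ _] at h4
      calc Real.exp (-1) = Real.exp (-(1/(k:ℝ))) ^ k := by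
            rw [← Real.exp_nat_mul]; congr 1; field_simp
        _ ≤ q ^ k := pow_le_pow_left₀ (Real.exp_nonneg _) h3 k
  have h1e : 1 ≤ Real.exp 1 * q ^ k := by
    have h := mul_le_mul_of_nonneg_left hqk (Real.exp_pos 1).le
    rwa [← Real.exp_add, show (1:ℝ) + -1 = 0 by ring, Real.exp_zero] at h
  -- conclude
  rw [hEScard]
  have hkp1 : ((k:ℝ) + 1) * p = 1 := by rw [hp]; field_simp
  have hpos : (0:ℝ) < p ^ 2 * q ^ k := by
    have hq' : (0:ℝ) < q ^ k := lt_of_lt_of_le (Real.exp_pos _) hqk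
    positivity
  rw [← mul_le_mul_iff_of_pos_right hpos]
  calc (ES.card : ℝ) * (p ^ 2 * q ^ k) ≤ t * (p * (Fintype.card W : ℝ)) := hmain
    _ = t * (p * (Fintype.card W : ℝ)) * 1 := by ring
    _ ≤ t * (p * (Fintype.card W : ℝ)) * (Real.exp 1 * q ^ k) :=
        mul_le_mul_of_nonneg_left h1e
          (mul_nonneg ht (mul_nonneg hppos.le (Nat.cast_nonneg _)))
    _ = Real.exp 1 * t * ((k:ℝ) + 1) * (Fintype.card W : ℝ) * (p ^ 2 * q ^ k) := by
        linear_combination (-(Real.exp 1) * t * (Fintype.card W : ℝ) * p * q ^ k) * hkp1
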